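/- With u_b(r) the unique root of K(·;r) in (6/5, 4/3) for r > 2/3, the functions r ↦ μ_0(r, u_b(r)) and r ↦ D_0(r, u_b(r)) satisfy: μ_0(r, u_b(r)) → (3√115 − 65)/66 as r → (2/3)⁺, μ_0(r, u_b(r)) → −8/5 as r → ∞, D_0(r, u_b(r)) → (10/363)·(34 + 3√115) as r → (2/3)⁺, and D_0(r, u_b(r)) → 0 as r → ∞. -/

import Mathlib

open Filter Topology

noncomputable section

/-- The cubic `K(u;r)`. -/
def Kc (u r : ℝ) : ℝ := 40*u^3 - (50*r + 169)*u^2 + (160*r + 224)*u - 120*r - 96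

/-- `q_{f,+}(r) = 1 + √(r/(r + 1/10))`. -/
def qfp (r : ℝ) : ℝ := 1 + Real.sqrt (r / (r + 1/10))

/-- `q_{f,−}(r) = 1 − √(r/(r + 1/10))`. -/
def qfm (r : ℝ) : ℝ := 1 - Real.sqrt (r / (r + 1/10))

/-- `q_{b,+}(r,u) = 1 + √((r + u − 2)/(r + 1/10))`. -/
def qbp (r u : ℝ) : ℝ := 1 + Real.sqrt ((r + u - 2) / (r + 1/10))

/-- `q_{b,−}(r,u) = 1 − √((r + u − 2)/(r + 1/10))`. -/
def qbm (r u : ℝ) : ℝ := 1 - Real.sqrt ((r + u - 2) / (r + 1/10))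

/-- The singular wave-speed parameter `μ_0(r,u)`. -/
def mu0 (r u : ℝ) : ℝ :=
  (2*(2*qbm r u - qbp r u) + u*(2*qfm r - qfp r)) /
    (qbp r u - 2*qbm r u + qfp r - 2*qfm r)

/-- The singular diffusion coefficient `D_0(r,u)`. -/
def D0 (r u : ℝ) : ℝ :=
  2*(2 - u)^2 / ((r + 1/10) * (2*qbm r u - qbp r u + 2*qfm r - qfp r)^2)

lemma key1 (u r : ℝ) (h1 : 6/5 < u) (h2 : u < 4/3) (hr : 2/3 < r) (hK : Kc u r = 0) :
    2 - r ≤ u := by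
  have hA : 0 ≤ (4/3 - u)^2 * (287/120 - u) := by
    apply mul_nonneg (sq_nonneg _); linarith
  have hB : 0 ≤ (4/3 - u) * (r - 2/3) * (280/3 - 50*u) := by
    apply mul_nonneg (mul_nonneg (by linarith) (by linarith)); linarith
  have hK' : 40*u^3 - (50*r + 169)*u^2 + (160*r + 224)*u - 120*r - 96 = 0 := hK
  nlinarith [hA, hB, hK']

lemma key2 (u r : ℝ) (h1 : 6/5 < u) (h2 : u < 4/3) (hr : 2/3 < r) (hK : Kc u r = 0) :
    u ≤ 6/5 + 9/100 * r⁻¹ := by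
  have hP : 0 ≤ 40*u^3 - 169*u^2 + 224*u - 93 := by
    nlinarith [mul_nonneg (mul_nonneg (sub_nonneg.2 h1.le) (sub_nonneg.2 h2.le)) (sub_nonneg.2 h2.le),
      sq_nonneg (u - 4/3), mul_nonneg (sub_nonneg.2 h1.le) (sub_nonneg.2 h2.le)]
  have hA : 0 ≤ 10*r*(5*u - 6)*(4/3 - u) := by
    apply mul_nonneg (mul_nonneg (by linarith) (by linarith)); linarith
  have hK' : 40*u^3 - (50*r + 169)*u^2 + (160*r + 224)*u - 120*r - 96 = 0 := hK
  have hm : 20*(r*(5*u-6)) ≤ 9 := by nlinarith [hP, hA, hK']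
  have hr0 : (0:ℝ) < r := by linarith
  have h : u - 6/5 ≤ 9/100 * r⁻¹ := by
    rw [show (9:ℝ)/100 * r⁻¹ = (9/100)/r from by ring, le_div_iff₀ hr0]
    nlinarith [hm]
  linarith

lemma mu0_eq (r u : ℝ) :
    mu0 r u = (2*(1 - 3*Real.sqrt ((r+u-2)/(r+1/10))) + u*(1 - 3*Real.sqrt (r/(r+1/10)))) /
      (3*Real.sqrt ((r+u-2)/(r+1/10)) + 3*Real.sqrt (r/(r+1/10)) - 2) := by
  simp only [mu0, qbp, qbm, qfp, qfm]
  congr 1 <;> ring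

lemma D0_eq (r u : ℝ) :
    D0 r u = 2*(2-u)^2 /
      ((r + 1/10) * (2 - 3*Real.sqrt ((r+u-2)/(r+1/10)) - 3*Real.sqrt (r/(r+1/10)))^2) := by
  simp only [D0, qbp, qbm, qfp, qfm]
  congr 3
  ring

lemma sqrt2023 : Real.sqrt (20/23) = 2 * Real.sqrt 115 / 23 := by
  rw [show (20:ℝ)/23 = (2/23)^2 * 115 by norm_num, Real.sqrt_mul (by positivity),
    Real.sqrt_sq (by norm_num)]
  ring

lemma sqrt115_gt : (10:ℝ) < Real.sqrt 115 := by
  rw [show (10:ℝ) = Real.sqrt 100 by rw [show (100:ℝ)=10^2 by norm_num, Real.sqrt_sq]; norm_num]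
  exact Real.sqrt_lt_sqrt (by norm_num) (by norm_num)

theorem stmt10 (ub : ℝ → ℝ)
    (hub : ∀ r : ℝ, 2/3 < r → ub r ∈ Set.Ioo (6/5 : ℝ) (4/3) ∧ Kc (ub r) r = 0) :
    Tendsto (fun r => mu0 r (ub r)) (nhdsWithin (2/3) (Set.Ioi (2/3)))
      (nhds ((3 * Real.sqrt 115 - 65) / 66)) ∧
    Tendsto (fun r => mu0 r (ub r)) atTop (nhds (-8/5)) ∧
    Tendsto (fun r => D0 r (ub r)) (nhdsWithin (2/3) (Set.Ioi (2/3)))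
      (nhds ((10/363) * (34 + 3 * Real.sqrt 115))) ∧
    Tendsto (fun r => D0 r (ub r)) atTop (nhds 0) := by
  set t := Real.sqrt 115 with ht
  have ht2 : t^2 = 115 := Real.sq_sqrt (by norm_num)
  have ht10 : (10:ℝ) < t := sqrt115_gt
  set σ := Real.sqrt (20/23) with hσdef
  have hσ : σ = 2*t/23 := by rw [hσdef, sqrt2023]
  -- limits of ub
  have hub1 : Tendsto ub (nhdsWithin (2/3) (Set.Ioi (2/3))) (nhds (4/3)) := by
    apply tendsto_of_tendsto_of_tendsto_of_le_of_le' (g := fun r : ℝ => 2 - r)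
      (h := fun _ : ℝ => (4:ℝ)/3)
    · have : (4:ℝ)/3 = 2 - 2/3 := by norm_num
      rw [this]
      exact ((continuous_const.sub continuous_id).tendsto _).mono_left nhdsWithin_le_nhds
    · exact tendsto_const_nhds
    · filter_upwards [self_mem_nhdsWithin] with r hr
      obtain ⟨⟨h1, h2⟩, hK⟩ := hub r hr
      exact key1 _ _ h1 h2 hr hK
    · filter_upwards [self_mem_nhdsWithin] with r hr
      exact (hub r hr).1.2.le
  have hub2 : Tendsto ub atTop (nhds (6/5)) := by
    apply tendsto_of_tendsto_of_tendsto_of_le_of_le' (g := fun _ : ℝ => (6:ℝ)/5)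
      (h := fun r : ℝ => 6/5 + 9/100 * r⁻¹)
    · exact tendsto_const_nhds
    · have : Tendsto (fun r : ℝ => 6/5 + 9/100 * r⁻¹) atTop (nhds (6/5 + 9/100 * 0)) :=
        tendsto_const_nhds.add (tendsto_inv_atTop_zero.const_mul _)
      simpa using this
    · filter_upwards [eventually_gt_atTop (2/3 : ℝ)] with r hr
      exact (hub r hr).1.1.le
    · filter_upwards [eventually_gt_atTop (2/3 : ℝ)] with r hr
      obtain ⟨⟨h1, h2⟩, hK⟩ := hub r hr
      exact key2 _ _ h1 h2 hr hK
  -- sqrt limits near 2/3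
  have hrid : Tendsto (fun r : ℝ => r) (nhdsWithin (2/3) (Set.Ioi (2/3))) (nhds (2/3)) :=
    tendsto_id.mono_left nhdsWithin_le_nhds
  have hX1 : Tendsto (fun r : ℝ => Real.sqrt (r/(r+1/10)))
      (nhdsWithin (2/3) (Set.Ioi (2/3))) (nhds σ) := by
    have h0 : Tendsto (fun r : ℝ => r/(r+1/10)) (nhdsWithin (2/3) (Set.Ioi (2/3)))
        (nhds (20/23)) := by
      have := hrid.div (hrid.add (tendsto_const_nhds (x := (1:ℝ)/10))) (by norm_num)
      convert this using 2
      all_goals norm_num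
    have := (Real.continuous_sqrt.tendsto (20/23)).comp h0
    exact this
  have hY1 : Tendsto (fun r : ℝ => Real.sqrt ((r + ub r - 2)/(r+1/10)))
      (nhdsWithin (2/3) (Set.Ioi (2/3))) (nhds 0) := by
    have h0 : Tendsto (fun r : ℝ => (r + ub r - 2)/(r+1/10))
        (nhdsWithin (2/3) (Set.Ioi (2/3))) (nhds 0) := by
      have := ((hrid.add hub1).sub (tendsto_const_nhds (x := (2:ℝ)))).div
        (hrid.add (tendsto_const_nhds (x := (1:ℝ)/10))) (by norm_num)
      convert this using 2
      all_goals norm_num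
    have := (Real.continuous_sqrt.tendsto 0).comp h0
    simpa [Function.comp_def] using this
  -- sqrt limits at infinity
  have hinv : Tendsto (fun r : ℝ => (r+1/10)⁻¹) atTop (nhds 0) :=
    tendsto_inv_atTop_zero.comp (tendsto_atTop_add_const_right _ _ tendsto_id)
  have hXT : Tendsto (fun r : ℝ => Real.sqrt (r/(r+1/10))) atTop (nhds 1) := by
    have h0 : Tendsto (fun r : ℝ => r/(r+1/10)) atTop (nhds 1) := by
      have h1 : Tendsto (fun r : ℝ => 1 - (1/10)*(r+1/10)⁻¹) atTop (nhds (1 - (1/10)*0)) :=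
        tendsto_const_nhds.sub (hinv.const_mul _)
      rw [show (1:ℝ) - (1/10)*0 = 1 by norm_num] at h1
      apply h1.congr'
      filter_upwards [eventually_gt_atTop (0:ℝ)] with r hr
      have : r + 1/10 ≠ 0 := by positivity
      field_simp
      ring
    have := (Real.continuous_sqrt.tendsto 1).comp h0
    simpa [Function.comp_def] using this
  have hYT : Tendsto (fun r : ℝ => Real.sqrt ((r + ub r - 2)/(r+1/10))) atTop (nhds 1) := by
    have h0 : Tendsto (fun r : ℝ => (r + ub r - 2)/(r+1/10)) atTop (nhds 1) := by
      have h1 : Tendsto (fun r : ℝ => 1 + (ub r - 21/10)*(r+1/10)⁻¹) atTop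
          (nhds (1 + (6/5 - 21/10)*0)) :=
        tendsto_const_nhds.add ((hub2.sub tendsto_const_nhds).mul hinv)
      rw [show (1:ℝ) + (6/5 - 21/10)*0 = 1 by norm_num] at h1
      apply h1.congr'
      filter_upwards [eventually_gt_atTop (0:ℝ)] with r hr
      have : r + 1/10 ≠ 0 := by positivity
      field_simp
      ring
    have := (Real.continuous_sqrt.tendsto 1).comp h0
    simpa [Function.comp_def] using this
  refine ⟨?_, ?_, ?_, ?_⟩
  · -- mu0 near 2/3
    simp only [mu0_eq]
    have hden : Tendsto (fun r : ℝ => 3*Real.sqrt ((r + ub r - 2)/(r+1/10)) +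
        3*Real.sqrt (r/(r+1/10)) - 2) (nhdsWithin (2/3) (Set.Ioi (2/3)))
        (nhds (3*0 + 3*σ - 2)) :=
      ((hY1.const_mul 3).add (hX1.const_mul 3)).sub tendsto_const_nhds
    have hnum : Tendsto (fun r : ℝ => 2*(1 - 3*Real.sqrt ((r + ub r - 2)/(r+1/10))) +
        ub r*(1 - 3*Real.sqrt (r/(r+1/10)))) (nhdsWithin (2/3) (Set.Ioi (2/3)))
        (nhds (2*(1 - 3*0) + 4/3*(1 - 3*σ))) :=
      ((tendsto_const_nhds.sub (hY1.const_mul 3)).const_mul 2).add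
        (hub1.mul (tendsto_const_nhds.sub (hX1.const_mul 3)))
    have hne : 3*(0:ℝ) + 3*σ - 2 ≠ 0 := by rw [hσ]; nlinarith
    have := hnum.div hden hne
    convert this using 2
    · rfl
    rw [hσ]
    rw [div_eq_div_iff (by norm_num) (by rw [hσ] at hne; simpa using hne)]
    nlinarith [ht2]
  · -- mu0 at infinity
    simp only [mu0_eq]
    have hden : Tendsto (fun r : ℝ => 3*Real.sqrt ((r + ub r - 2)/(r+1/10)) +
        3*Real.sqrt (r/(r+1/10)) - 2) atTop (nhds (3*1 + 3*1 - 2)) :=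
      ((hYT.const_mul 3).add (hXT.const_mul 3)).sub tendsto_const_nhds
    have hnum : Tendsto (fun r : ℝ => 2*(1 - 3*Real.sqrt ((r + ub r - 2)/(r+1/10))) +
        ub r*(1 - 3*Real.sqrt (r/(r+1/10)))) atTop
        (nhds (2*(1 - 3*1) + 6/5*(1 - 3*1))) :=
      ((tendsto_const_nhds.sub (hYT.const_mul 3)).const_mul 2).add
        (hub2.mul (tendsto_const_nhds.sub (hXT.const_mul 3)))
    have := hnum.div hden (by norm_num)
    convert this using 2
    all_goals norm_num
  · -- D0 near 2/3
    simp only [D0_eq]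
    have hnum : Tendsto (fun r : ℝ => 2*(2 - ub r)^2) (nhdsWithin (2/3) (Set.Ioi (2/3)))
        (nhds (2*(2 - 4/3)^2)) :=
      ((tendsto_const_nhds.sub hub1).pow 2).const_mul 2
    have hden : Tendsto (fun r : ℝ => (r + 1/10) *
        (2 - 3*Real.sqrt ((r + ub r - 2)/(r+1/10)) - 3*Real.sqrt (r/(r+1/10)))^2)
        (nhdsWithin (2/3) (Set.Ioi (2/3)))
        (nhds ((2/3 + 1/10) * (2 - 3*0 - 3*σ)^2)) :=
      (hrid.add tendsto_const_nhds).mul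
        (((tendsto_const_nhds.sub (hY1.const_mul 3)).sub (hX1.const_mul 3)).pow 2)
    have hσne : 2 - 3*(0:ℝ) - 3*σ ≠ 0 := by rw [hσ]; nlinarith
    have hne : (2/3 + 1/10) * (2 - 3*(0:ℝ) - 3*σ)^2 ≠ 0 := by
      apply mul_ne_zero (by norm_num) (pow_ne_zero _ hσne)
    have := hnum.div hden hne
    convert this using 2
    · rfl
    rw [hσ] at hσne ⊢
    rw [eq_div_iff (by apply mul_ne_zero (by norm_num) (pow_ne_zero _ hσne))]
    nlinarith [ht2]
  · -- D0 at infinity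
    have heq : (fun r => D0 r (ub r)) = fun r : ℝ =>
        (2*(2 - ub r)^2 /
          (2 - 3*Real.sqrt ((r + ub r - 2)/(r+1/10)) - 3*Real.sqrt (r/(r+1/10)))^2) *
        (r + 1/10)⁻¹ := by
      funext r
      rw [D0_eq, div_mul_eq_div_div_swap, div_eq_mul_inv]
    rw [heq]
    have h1 : Tendsto (fun r : ℝ => 2*(2 - ub r)^2 /
        (2 - 3*Real.sqrt ((r + ub r - 2)/(r+1/10)) - 3*Real.sqrt (r/(r+1/10)))^2) atTop
        (nhds (2*(2 - 6/5)^2 / (2 - 3*1 - 3*1)^2)) :=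
      (((tendsto_const_nhds.sub hub2).pow 2).const_mul 2).div
        (((tendsto_const_nhds.sub (hYT.const_mul 3)).sub (hXT.const_mul 3)).pow 2)
        (by norm_num)
    have := h1.mul hinv
    simpa using this
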